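/- Let v = [v_0, v_1(g_1) = λ_1, …, v_n(g_n) = λ_n] be an inductive (Mac Lane) valuation on K(x), with λ_i = c_i/d_i in lowest terms. Then the multiplicity of the irreducible component of the special fiber corresponding to v in any normal model of P¹_K containing it equals lcm(d_1, …, d_n); equivalently, the normalized value w(π_K) equals lcm(d_1, …, d_n), where w is the rescaling of v having value group ℤ. -/

import Mathlib

/-- Let `v = [v₀, v₁(g₁) = λ₁, …, vₙ(gₙ) = λₙ]` be an
inductive (Mac Lane) valuation on `K(x)`, with `λᵢ = cᵢ/dᵢ` in lowest terms.
Then the multiplicity of the irreducible component of the special fiber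
corresponding to `v` in any normal model of `P¹_K` equals `lcm(d₁, …, dₙ)`;
equivalently, `w(π_K) = lcm(d₁, …, dₙ)`, where `w` is the rescaling of `v`
having value group `ℤ`.

We encode `v` as a (rank-one, `ℚ`-valued) discrete valuation on the rational
function field `RatFunc K`, normalized so that `v(π_K) = 1`, taking the values
`v(gᵢ) = λᵢ` on the augmenting key polynomials, and whose value group is the
subgroup of `ℚ` generated by `1, λ₁, …, λₙ` (these are the defining properties
of the inductive valuation used here).  A rescaling of `v` with value group
`ℤ` is a positive multiple `m • v` all of whose values on nonzero elements are
integers, with the value `1` attained; the conclusion is that any such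
rescaling sends `π_K` to `lcm(d₁, …, dₙ)`. -/
theorem stmt19 {K : Type*} [Field K] (n : ℕ)
    (g : Fin n → Polynomial K) (lam : Fin n → ℚ) (c : Fin n → ℤ) (d : Fin n → ℕ)
    (hd : ∀ i, 0 < d i) (hlam : ∀ i, lam i = (c i : ℚ) / (d i : ℚ))
    (hcop : ∀ i, Nat.Coprime (c i).natAbs (d i))
    (v : RatFunc K → ℚ) (πK : K) (hπK : πK ≠ 0)
    (hmul : ∀ f h : RatFunc K, f ≠ 0 → h ≠ 0 → v (f * h) = v f + v h)
    (hadd : ∀ f h : RatFunc K, f ≠ 0 → h ≠ 0 → f + h ≠ 0 →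
      min (v f) (v h) ≤ v (f + h))
    -- `v` extends `v_K`, normalized by `v(π_K) = 1`
    (hπ : v (RatFunc.C πK) = 1)
    -- the values of `v` on the key polynomials `gᵢ` are the `λᵢ`
    (hg : ∀ i, g i ≠ 0 ∧ v (algebraMap (Polynomial K) (RatFunc K) (g i)) = lam i)
    -- the value group of `v` is generated by `1, λ₁, …, λₙ`
    (hgroup : ∀ f : RatFunc K, f ≠ 0 →
      v f ∈ AddSubgroup.closure ({1} ∪ Set.range lam)) :
    ∀ m : ℚ, 0 < m →
      (∀ f : RatFunc K, f ≠ 0 → ∃ z : ℤ, m * v f = (z : ℚ)) →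
      (∃ f : RatFunc K, f ≠ 0 ∧ m * v f = 1) →
      m * v (RatFunc.C πK) = ((Finset.univ.fold Nat.lcm 1 d : ℕ) : ℚ) := by
  intro m hm hint hone
  set L : ℕ := Finset.univ.fold Nat.lcm 1 d with hL
  have hLlcm : L = Finset.univ.lcm d := rfl
  have hdvdL : ∀ i, d i ∣ L := fun i => hLlcm ▸ Finset.dvd_lcm (Finset.mem_univ i)
  have hLpos : 0 < L := by
    rcases Nat.eq_zero_or_pos L with h0 | h
    · exfalso
      rw [hLlcm] at h0
      rcases (Finset.lcm_eq_zero_iff).mp h0 with ⟨i, -, hi⟩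
      exact (hd i).ne' hi
    · exact h
  -- π_K is nonzero in RatFunc K
  have hCπ : (RatFunc.C πK : RatFunc K) ≠ 0 := by
    simpa using (map_ne_zero (RatFunc.C (K := K))).mpr hπK
  rw [hπ, mul_one]
  -- m is a positive integer M
  obtain ⟨M, hM⟩ := hint _ hCπ
  rw [hπ, mul_one] at hM
  have hMpos : 0 < M := by exact_mod_cast hM ▸ hm
  -- each d i divides M
  have hdM : ∀ i, (d i : ℤ) ∣ M := by
    intro i
    obtain ⟨z, hz⟩ := hint _ ((RatFunc.algebraMap_ne_zero (hg i).1))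
    rw [(hg i).2, hlam i] at hz
    have hdne : ((d i : ℚ)) ≠ 0 := by exact_mod_cast (hd i).ne'
    field_simp [hM] at hz
    have hzz : M * c i = z * d i := by
      rw [hM] at hz
      have h' : ((M * c i : ℤ) : ℚ) = ((z * d i : ℤ) : ℚ) := by
        push_cast at hz ⊢
        linear_combination hz
      exact_mod_cast h'
    have hdvd : (d i : ℤ) ∣ M * c i := ⟨z, by linarith [hzz]⟩
    have hco : IsCoprime ((d i : ℤ)) (c i) := by
      rw [Int.isCoprime_iff_gcd_eq_one]
      simpa [Int.gcd, Nat.coprime_comm] using (hcop i)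
    exact hco.dvd_of_dvd_mul_right hdvd
  have hMtoNat : (M.toNat : ℤ) = M := Int.toNat_of_nonneg hMpos.le
  have hLMnat : L ∣ M.toNat := by
    rw [hLlcm]
    refine Finset.lcm_dvd fun i _ => ?_
    have := hdM i
    rw [← hMtoNat] at this
    exact_mod_cast this
  have hLM : (L : ℤ) ∣ M := by
    rw [← hMtoNat]; exact_mod_cast hLMnat
  -- L * (v f) is an integer for every nonzero f
  have hLv : ∀ f : RatFunc K, f ≠ 0 → ∃ z : ℤ, (L : ℚ) * v f = (z : ℚ) := by
    intro f hf
    refine AddSubgroup.closure_induction ?_ ?_ ?_ ?_ (hgroup f hf)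
    · rintro x (rfl | ⟨i, rfl⟩)
      · exact ⟨L, by norm_num⟩
      · obtain ⟨e, he⟩ := hdvdL i
        refine ⟨(e : ℤ) * c i, ?_⟩
        have hdne : ((d i : ℚ)) ≠ 0 := by exact_mod_cast (hd i).ne'
        rw [hlam i]
        field_simp
        push_cast [he]
        ring
    · exact ⟨0, by norm_num⟩
    · rintro x y hx hy ⟨a, ha⟩ ⟨b, hb⟩
      exact ⟨a + b, by push_cast; rw [mul_add, ha, hb]⟩
    · rintro x hx ⟨a, ha⟩
      exact ⟨-a, by push_cast; rw [mul_neg, ha]⟩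
  -- use the element achieving value 1
  obtain ⟨f₀, hf₀, hvf₀⟩ := hone
  obtain ⟨k, hk⟩ := hLv f₀ hf₀
  have hMk : M * k = L := by
    have : (M : ℚ) * k = L := by
      calc (M : ℚ) * k = (M : ℚ) * ((L : ℚ) * v f₀) := by rw [hk]
        _ = (L : ℚ) * (m * v f₀) := by rw [hM]; ring
        _ = L := by rw [hvf₀, mul_one]
    exact_mod_cast this
  obtain ⟨t, ht⟩ := hLM
  have hLne : (L : ℤ) ≠ 0 := by exact_mod_cast hLpos.ne'
  have htk : t * k = 1 := by
    have h2 : (L : ℤ) * (t * k) = (L : ℤ) * 1 := by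
      rw [mul_one]
      calc (L : ℤ) * (t * k) = ((L : ℤ) * t) * k := by ring
        _ = M * k := by rw [← ht]
        _ = L := hMk
    exact mul_left_cancel₀ hLne h2
  have htpos : 0 < t := by
    rcases lt_trichotomy t 0 with h | h | h
    · nlinarith [hLpos, ht, hMpos]
    · simp [h] at htk
    · exact h
  have ht1 : t = 1 := by
    rcases Int.isUnit_iff.mp (IsUnit.of_mul_eq_one (a := t) k htk) with h | h
    · exact h
    · omega
  have hML : M = (L : ℤ) := by rw [ht, ht1, mul_one]
  rw [hM]
  exact_mod_cast hML
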